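/- arXiv:1810.02993 — 2 statements merged into one kernel-verified Lean document; each statement's English description precedes it below -/
import Mathlib

section
/- Let [u_0, u_1, …, u_n] be an ECT-system on a closed interval [a, b], i.e., for each 0 ≤ k ≤ n the Wronskian W_k(u_0, …, u_k)(x) is nonzero for all x in [a, b]. Then every nonzero linear combination c_0 u_0 + c_1 u_1 + ⋯ + c_n u_n has at most n zeros in [a, b], counted with multiplicity. -/
open Set Finset

namespace KS

variable {U : Set ℝ}

lemma deriv_congr_on (hU : IsOpen U) {f g : ℝ → ℝ}
    (h : ∀ y ∈ U, f y = g y) {x : ℝ} (hx : x ∈ U) : deriv f x = deriv g x := by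
  have : f =ᶠ[nhds x] g := Filter.eventuallyEq_of_mem (hU.mem_nhds hx) h
  exact this.deriv_eq

lemma iteratedDeriv_congr_on (hU : IsOpen U) {f g : ℝ → ℝ}
    (h : ∀ y ∈ U, f y = g y) (m : ℕ) {x : ℝ} (hx : x ∈ U) :
    iteratedDeriv m f x = iteratedDeriv m g x := by
  induction m generalizing f g with
  | zero => simpa using h x hx
  | succ m ih =>
    rw [iteratedDeriv_succ', iteratedDeriv_succ']
    exact ih (fun y hy => deriv_congr_on hU h hy)

lemma contDiffOn_iteratedDeriv (hU : IsOpen U) {N : ℕ} {f : ℝ → ℝ}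
    (hf : ContDiffOn ℝ N f U) : ∀ j ≤ N, ContDiffOn ℝ ((N - j : ℕ)) (iteratedDeriv j f) U := by
  induction N generalizing f with
  | zero => intro j hj; interval_cases j; simpa using hf
  | succ N ih =>
    intro j hj
    cases j with
    | zero => simpa using hf
    | succ j =>
      rw [iteratedDeriv_succ']
      have hd : ContDiffOn ℝ N (deriv f) U := by
        apply hf.deriv_of_isOpen hU
        exact_mod_cast le_refl (N+1 : ℕ)
      have := ih hd j (Nat.succ_le_succ_iff.mp hj)
      simpa [Nat.succ_sub_succ] using this

lemma differentiableAt_iteratedDeriv (hU : IsOpen U) {N : ℕ} {f : ℝ → ℝ}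
    (hf : ContDiffOn ℝ N f U) {j : ℕ} (hj : j < N) {x : ℝ} (hx : x ∈ U) :
    DifferentiableAt ℝ (iteratedDeriv j f) x := by
  have h1 := contDiffOn_iteratedDeriv hU hf j hj.le
  have h2 : (1 : WithTop ℕ∞) ≤ ((N - j : ℕ) : WithTop ℕ∞) := by
    exact_mod_cast Nat.one_le_iff_ne_zero.mpr (Nat.sub_ne_zero_of_lt hj)
  exact ((h1.differentiableOn (lt_of_lt_of_le zero_lt_one h2).ne').differentiableAt (hU.mem_nhds hx))

lemma iteratedDeriv_mul (hU : IsOpen U) {N : ℕ} {f g : ℝ → ℝ}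
    (hdf : ∀ j < N, ∀ x ∈ U, DifferentiableAt ℝ (iteratedDeriv j f) x)
    (hdg : ∀ j < N, ∀ x ∈ U, DifferentiableAt ℝ (iteratedDeriv j g) x) :
    ∀ i ≤ N, ∀ x ∈ U, iteratedDeriv i (fun y => f y * g y) x
      = ∑ j ∈ Finset.range (i+1),
          (i.choose j : ℝ) * iteratedDeriv j f x * iteratedDeriv (i-j) g x := by
  intro i
  induction i with
  | zero => intro _ x hx; simp
  | succ i ih =>
    intro hi x hx
    have hEq : ∀ y ∈ U, iteratedDeriv i (fun y => f y * g y) y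
        = ∑ j ∈ Finset.range (i+1),
            (i.choose j : ℝ) * iteratedDeriv j f y * iteratedDeriv (i-j) g y :=
      fun y hy => ih (le_trans (Nat.le_succ i) hi) y hy
    rw [iteratedDeriv_succ, deriv_congr_on hU hEq hx]
    have hderiv : deriv (fun y => ∑ j ∈ Finset.range (i+1),
        (i.choose j : ℝ) * iteratedDeriv j f y * iteratedDeriv (i-j) g y) x
        = ∑ j ∈ Finset.range (i+1), (i.choose j : ℝ) *
            (iteratedDeriv (j+1) f x * iteratedDeriv (i-j) g x
              + iteratedDeriv j f x * iteratedDeriv (i-j+1) g x) := by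
      rw [deriv_fun_sum]
      · apply Finset.sum_congr rfl
        intro j hj
        simp only [Finset.mem_range, Nat.lt_succ_iff] at hj
        have hjf : DifferentiableAt ℝ (iteratedDeriv j f) x :=
          hdf j (lt_of_le_of_lt hj hi) x hx
        have hjg : DifferentiableAt ℝ (iteratedDeriv (i-j) g) x :=
          hdg (i-j) (lt_of_le_of_lt (Nat.sub_le i j) hi) x hx
        have hfun : (fun y => (i.choose j : ℝ) * iteratedDeriv j f y * iteratedDeriv (i-j) g y)
            = fun y => (i.choose j : ℝ) * (iteratedDeriv j f y * iteratedDeriv (i-j) g y) := by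
          funext y; ring
        rw [hfun, deriv_const_mul _ (hjf.fun_mul hjg), deriv_fun_mul hjf hjg,
          ← iteratedDeriv_succ, ← iteratedDeriv_succ]
      · intro j hj
        simp only [Finset.mem_range, Nat.lt_succ_iff] at hj
        have hjf : DifferentiableAt ℝ (iteratedDeriv j f) x :=
          hdf j (lt_of_le_of_lt hj hi) x hx
        have hjg : DifferentiableAt ℝ (iteratedDeriv (i-j) g) x :=
          hdg (i-j) (lt_of_le_of_lt (Nat.sub_le i j) hi) x hx
        exact (hjf.const_mul _).mul hjg
    rw [hderiv]
    -- now the binomial reindexing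
    set P : ℕ → ℝ := fun j => iteratedDeriv j f x with hP
    set Q : ℕ → ℝ := fun j => iteratedDeriv j g x with hQ
    show ∑ j ∈ Finset.range (i+1), (i.choose j : ℝ) *
            (P (j+1) * Q (i-j) + P j * Q (i-j+1))
      = ∑ j ∈ Finset.range (i+1+1), ((i+1).choose j : ℝ) * P j * Q (i+1-j)
    have expand : ∀ j, (i.choose j : ℝ) * (P (j+1) * Q (i-j) + P j * Q (i-j+1))
        = (i.choose j : ℝ) * P (j+1) * Q (i-j) + (i.choose j : ℝ) * P j * Q (i-j+1) := by
      intro j; ring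
    rw [Finset.sum_congr rfl (fun j _ => expand j), Finset.sum_add_distrib]
    rw [Finset.sum_range_succ' (fun j => ((i+1).choose j : ℝ) * P j * Q (i+1-j)) (i+1)]
    have key : ∀ j ∈ Finset.range (i+1),
        ((i+1).choose (j+1) : ℝ) * P (j+1) * Q (i+1-(j+1))
        = (i.choose j : ℝ) * P (j+1) * Q (i-j) + (i.choose (j+1) : ℝ) * P (j+1) * Q (i-j) := by
      intro j hj
      have hc : (i+1).choose (j+1) = i.choose j + i.choose (j+1) := Nat.choose_succ_succ i j
      rw [hc]
      push_cast
      ring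
    rw [Finset.sum_congr rfl key, Finset.sum_add_distrib]
    have h0 : ((i+1).choose 0 : ℝ) * P 0 * Q (i+1-0) = P 0 * Q (i+1) := by simp
    rw [h0]
    have e2 : ∀ j ∈ Finset.range i,
        (i.choose (j+1) : ℝ) * P (j+1) * Q (i-(j+1)+1)
        = (i.choose (j+1) : ℝ) * P (j+1) * Q (i-j) := by
      intro j hj
      simp only [Finset.mem_range] at hj
      have : i - (j+1) + 1 = i - j := by omega
      rw [this]
    have e3 : ∑ j ∈ Finset.range (i+1), (i.choose (j+1) : ℝ) * P (j+1) * Q (i-j)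
        = ∑ j ∈ Finset.range i, (i.choose (j+1) : ℝ) * P (j+1) * Q (i-j) := by
      rw [Finset.sum_range_succ]
      simp [Nat.choose_succ_self]
    have hS2 : ∑ j ∈ Finset.range (i+1), (i.choose j : ℝ) * P j * Q (i-j+1)
        = (∑ j ∈ Finset.range (i+1), (i.choose (j+1) : ℝ) * P (j+1) * Q (i-j)) + P 0 * Q (i+1) := by
      rw [Finset.sum_range_succ' (fun j => (i.choose j : ℝ) * P j * Q (i-j+1)) i]
      rw [Finset.sum_congr rfl e2, e3]
      simp
    rw [hS2]
    ring

lemma det_expand_first_col {k : ℕ} (M : Matrix (Fin (k+2)) (Fin (k+2)) ℝ)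
    (h0 : M 0 0 = 1) (h : ∀ i : Fin (k+1), M i.succ 0 = 0) :
    M.det = (M.submatrix Fin.succ Fin.succ).det := by
  rw [Matrix.det_succ_column_zero]
  rw [Finset.sum_eq_single 0]
  · simp [h0, Fin.succAbove_zero]
  · intro i _ hi
    obtain ⟨j, rfl⟩ := Fin.eq_succ_of_ne_zero hi
    simp [h j]
  · simp

/-- If `m i j = ∑_{l ≤ i} choose i l * w (i-l) * g l j` (Leibniz structure), then
`det m = (w 0)^(k+1) * det g` on `Fin (k+1)` indices. -/
lemma det_leibniz {k : ℕ} (w : ℕ → ℝ) (g : ℕ → ℕ → ℝ)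
    (m : ℕ → ℕ → ℝ)
    (hm : ∀ i ≤ k, ∀ j ≤ k, m i j
      = ∑ l ∈ Finset.range (i+1), (i.choose l : ℝ) * w (i-l) * g l j) :
    Matrix.det (fun i j : Fin (k+1) => m (i : ℕ) (j : ℕ))
      = (w 0)^(k+1) * Matrix.det (fun i j : Fin (k+1) => g (i : ℕ) (j : ℕ)) := by
  set L : Matrix (Fin (k+1)) (Fin (k+1)) ℝ :=
    fun i l => if (l : ℕ) ≤ (i : ℕ) then ((i : ℕ).choose (l : ℕ) : ℝ) * w ((i : ℕ) - (l : ℕ)) else 0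
    with hL
  set G : Matrix (Fin (k+1)) (Fin (k+1)) ℝ := fun l j => g (l : ℕ) (j : ℕ) with hG
  have hprod : (fun i j : Fin (k+1) => m (i : ℕ) (j : ℕ)) = L * G := by
    funext i j
    rw [Matrix.mul_apply]
    have h1 : ∑ l : Fin (k+1), L i l * G l j
        = ∑ l ∈ Finset.range (k+1),
            (if l ≤ (i : ℕ) then ((i : ℕ).choose l : ℝ) * w ((i : ℕ) - l) else 0) * g l (j : ℕ) := by
      rw [← Fin.sum_univ_eq_sum_range (fun l =>
        (if l ≤ (i : ℕ) then ((i : ℕ).choose l : ℝ) * w ((i : ℕ) - l) else 0) * g l (j : ℕ)) (k+1)]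
    rw [h1, hm (i : ℕ) (Nat.lt_succ_iff.mp i.isLt) (j : ℕ) (Nat.lt_succ_iff.mp j.isLt)]
    rw [← Finset.sum_subset (Finset.range_subset_range.mpr (Nat.succ_le_succ (Nat.lt_succ_iff.mp i.isLt)))]
    · apply Finset.sum_congr rfl
      intro l hl
      simp only [Finset.mem_range, Nat.lt_succ_iff] at hl
      rw [if_pos hl]
    · intro l _ hl
      simp only [Finset.mem_range, Nat.lt_succ_iff] at hl
      rw [if_neg hl, zero_mul]
  rw [hprod, Matrix.det_mul]
  congr 1
  rw [Matrix.det_of_lowerTriangular L]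
  · rw [hL]
    simp
  · intro i j hij
    rw [hL]
    simp only
    rw [if_neg]
    exact not_le.mpr hij

lemma rolle_count (B : ℕ) (hB : 1 ≤ B) (G : ℝ → ℝ) (m : ℝ → ℕ) :
    ∀ (n : ℕ) (Z : Finset ℝ), Z.card = n → ∀ (a b : ℝ), ContinuousOn G (Set.Icc a b) →
    (∀ x ∈ Z, x ∈ Set.Icc a b) → (∀ x ∈ Z, 1 ≤ m x) → (∀ x ∈ Z, m x ≤ B + 1) →
    (∀ x ∈ Z, ∀ i < m x, iteratedDeriv i G x = 0) →
    ∃ (Z' : Finset ℝ) (m' : ℝ → ℕ), (∀ x ∈ Z', x ∈ Set.Icc a b) ∧ (∀ x ∈ Z', 1 ≤ m' x) ∧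
      (∀ x ∈ Z', m' x ≤ B) ∧ (∀ x ∈ Z', ∀ i < m' x, iteratedDeriv i (deriv G) x = 0) ∧
      ∑ x ∈ Z, m x ≤ (∑ x ∈ Z', m' x) + 1 := by
  intro n
  induction n using Nat.strong_induction_on with
  | _ n ih =>
    intro Z hcard a b hGc hZab hm1 hmB hzero
    rcases Finset.eq_empty_or_nonempty Z with rfl | hne
    · exact ⟨∅, m, by simp, by simp, by simp, by simp, by simp⟩
    set xs := Z.max' hne with hxs
    have hxsZ : xs ∈ Z := Z.max'_mem hne
    set Z₀ := Z.erase xs with hZ₀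
    rcases Finset.eq_empty_or_nonempty Z₀ with hZ₀e | hZ₀ne
    · -- Z = {xs}
      have hZsing : Z = {xs} := by
        apply Finset.eq_singleton_iff_unique_mem.mpr
        refine ⟨hxsZ, fun y hy => ?_⟩
        by_contra hne2
        exact (Finset.eq_empty_iff_forall_notMem.mp hZ₀e y) (Finset.mem_erase.mpr ⟨hne2, hy⟩)
      by_cases h2 : 2 ≤ m xs
      · refine ⟨{xs}, fun y => m y - 1, ?_, ?_, ?_, ?_, ?_⟩
        · intro x hx; rw [Finset.mem_singleton] at hx; subst hx; exact hZab xs hxsZ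
        · intro x hx; rw [Finset.mem_singleton] at hx; subst hx
          show 1 ≤ m xs - 1; omega
        · intro x hx; rw [Finset.mem_singleton] at hx; subst hx
          show m xs - 1 ≤ B
          have := hmB xs hxsZ; omega
        · intro x hx i hi; rw [Finset.mem_singleton] at hx; subst hx
          have hi' : i < m xs - 1 := hi
          rw [← iteratedDeriv_succ']
          exact hzero xs hxsZ (i+1) (by omega)
        · rw [hZsing]
          simp only [Finset.sum_singleton]
          show m xs ≤ (m xs - 1) + 1
          omega
      · refine ⟨∅, m, by simp, by simp, by simp, by simp, ?_⟩
        rw [hZsing]; simp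
        have := hm1 xs hxsZ; omega
    · -- Z₀ nonempty
      set y := Z₀.max' hZ₀ne with hy
      have hyZ₀ : y ∈ Z₀ := Z₀.max'_mem hZ₀ne
      have hyZ : y ∈ Z := Finset.mem_of_mem_erase hyZ₀
      have hyx : y < xs := by
        have h1 : y ≤ xs := Finset.le_max' Z y hyZ
        have h2 : y ≠ xs := (Finset.mem_erase.mp hyZ₀).1
        exact lt_of_le_of_ne h1 h2
      have hZ₀le : ∀ z ∈ Z₀, z ≤ y := fun z hz => Finset.le_max' Z₀ z hz
      have hay : a ≤ y := (hZab y hyZ).1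
      have hyb : y ≤ b := (hZab y hyZ).2
      have hxsb : xs ≤ b := (hZab xs hxsZ).2
      have haxs : a ≤ xs := (hZab xs hxsZ).1
      -- IH on Z₀ over [a, y]
      have hcard₀ : Z₀.card < n := by
        rw [← hcard, hZ₀]; exact Finset.card_erase_lt_of_mem hxsZ
      obtain ⟨Z'₀, m'₀, hmem₀, h1₀, hB₀, hz₀, hsum₀⟩ :=
        ih Z₀.card hcard₀ Z₀ rfl a y
          (hGc.mono (Set.Icc_subset_Icc_right hyb))
          (fun z hz => ⟨(hZab z (Finset.mem_of_mem_erase hz)).1, hZ₀le z hz⟩)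
          (fun z hz => hm1 z (Finset.mem_of_mem_erase hz))
          (fun z hz => hmB z (Finset.mem_of_mem_erase hz))
          (fun z hz => hzero z (Finset.mem_of_mem_erase hz))
      -- Rolle point between y and xs
      have hGy : G y = 0 := by
        have := hzero y hyZ 0 (hm1 y hyZ); rwa [iteratedDeriv_zero] at this
      have hGxs : G xs = 0 := by
        have := hzero xs hxsZ 0 (hm1 xs hxsZ); rwa [iteratedDeriv_zero] at this
      obtain ⟨ξ, hξmem, hξ⟩ := exists_deriv_eq_zero hyx
        (hGc.mono (Set.Icc_subset_Icc hay hxsb))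
        (hGy.trans hGxs.symm)
      have hyξ : y < ξ := hξmem.1
      have hξxs : ξ < xs := hξmem.2
      have hξZ'₀ : ξ ∉ Z'₀ := fun h => absurd (hmem₀ ξ h).2 (not_le.mpr hyξ)
      have hxsZ'₀ : xs ∉ Z'₀ := fun h => absurd (hmem₀ xs h).2 (not_le.mpr (lt_trans hyξ hξxs))
      set m' : ℝ → ℕ := fun t => if t = ξ then 1 else if t = xs then m xs - 1 else m'₀ t with hm'
      have hm'ξ : m' ξ = 1 := by simp [hm']
      have hm'xs : m' xs = m xs - 1 := by
        simp only [hm']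
        rw [if_neg (show ¬ xs = ξ from (ne_of_lt hξxs).symm)]
        simp
      have hm'old : ∀ t ∈ Z'₀, m' t = m'₀ t := by
        intro t ht
        have hty : t ≤ y := (hmem₀ t ht).2
        simp only [hm']
        rw [if_neg (by intro h; subst h; exact absurd hty (not_le.mpr hyξ)),
          if_neg (by intro h; subst h; exact absurd hty (not_le.mpr (lt_trans hyξ hξxs)))]
      have hsumZ : ∑ x ∈ Z, m x = m xs + ∑ x ∈ Z₀, m x := by
        rw [hZ₀, ← Finset.sum_erase_add Z m hxsZ]
        exact Nat.add_comm _ _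
      by_cases h2 : 2 ≤ m xs
      · refine ⟨insert ξ (insert xs Z'₀), m', ?_, ?_, ?_, ?_, ?_⟩
        · intro x hx
          rcases Finset.mem_insert.mp hx with rfl | hx
          · exact ⟨le_trans hay (le_of_lt hyξ), le_trans (le_of_lt hξxs) hxsb⟩
          rcases Finset.mem_insert.mp hx with rfl | hx
          · exact ⟨haxs, hxsb⟩
          · exact ⟨(hmem₀ x hx).1, le_trans (hmem₀ x hx).2 hyb⟩
        · intro x hx
          rcases Finset.mem_insert.mp hx with rfl | hx
          · omega
          rcases Finset.mem_insert.mp hx with rfl | hx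
          · rw [hm'xs]; omega
          · rw [hm'old x hx]; exact h1₀ x hx
        · intro x hx
          rcases Finset.mem_insert.mp hx with rfl | hx
          · rw [hm'ξ]; omega
          rcases Finset.mem_insert.mp hx with rfl | hx
          · rw [hm'xs]; have := hmB xs hxsZ; omega
          · rw [hm'old x hx]; exact hB₀ x hx
        · intro x hx i hi
          rcases Finset.mem_insert.mp hx with rfl | hx
          · rw [hm'ξ] at hi
            interval_cases i
            simpa using hξ
          rcases Finset.mem_insert.mp hx with rfl | hx
          · rw [hm'xs] at hi
            rw [← iteratedDeriv_succ']
            exact hzero xs hxsZ (i+1) (by omega)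
          · rw [hm'old x hx] at hi
            exact hz₀ x hx i hi
        · rw [Finset.sum_insert (by
              intro h
              rcases Finset.mem_insert.mp h with h | h
              · exact absurd h (ne_of_lt hξxs)
              · exact hξZ'₀ h),
            Finset.sum_insert hxsZ'₀, hm'ξ, hm'xs, hsumZ,
            show ∑ x ∈ Z'₀, m' x = ∑ x ∈ Z'₀, m'₀ x from Finset.sum_congr rfl hm'old]
          omega
      · refine ⟨insert ξ Z'₀, m', ?_, ?_, ?_, ?_, ?_⟩
        · intro x hx
          rcases Finset.mem_insert.mp hx with rfl | hx
          · exact ⟨le_trans hay (le_of_lt hyξ), le_trans (le_of_lt hξxs) hxsb⟩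
          · exact ⟨(hmem₀ x hx).1, le_trans (hmem₀ x hx).2 hyb⟩
        · intro x hx
          rcases Finset.mem_insert.mp hx with rfl | hx
          · omega
          · rw [hm'old x hx]; exact h1₀ x hx
        · intro x hx
          rcases Finset.mem_insert.mp hx with rfl | hx
          · rw [hm'ξ]; omega
          · rw [hm'old x hx]; exact hB₀ x hx
        · intro x hx i hi
          rcases Finset.mem_insert.mp hx with rfl | hx
          · rw [hm'ξ] at hi
            interval_cases i
            simpa using hξ
          · rw [hm'old x hx] at hi
            exact hz₀ x hx i hi
        · rw [Finset.sum_insert hξZ'₀, hm'ξ, hsumZ,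
            show ∑ x ∈ Z'₀, m' x = ∑ x ∈ Z'₀, m'₀ x from Finset.sum_congr rfl hm'old]
          have hm1xs := hm1 xs hxsZ
          omega



lemma iteratedDeriv_const' : ∀ (i : ℕ) (c : ℝ) (x : ℝ), iteratedDeriv i (fun _ => c) x = if i = 0 then c else 0 := by
  intro i
  induction i with
  | zero => intro c x; simp
  | succ i ih =>
    intro c x
    rw [iteratedDeriv_succ']
    have : deriv (fun _ : ℝ => c) = fun _ : ℝ => (0 : ℝ) := by
      funext t; exact deriv_const t c
    rw [this, ih 0 x]
    simp

lemma main_induction : ∀ (n : ℕ) (U : Set ℝ), IsOpen U → ∀ (a b : ℝ), Set.Icc a b ⊆ U →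
    ∀ (u : ℕ → ℝ → ℝ), (∀ i ≤ n, ContDiffOn ℝ n (u i) U) →
    (∀ k ≤ n, ∀ x ∈ Set.Icc a b,
      Matrix.det (fun i j : Fin (k+1) => iteratedDeriv (i : ℕ) (u (j : ℕ)) x) ≠ 0) →
    ∀ (c : ℕ → ℝ) (Z : Finset ℝ) (m : ℝ → ℕ),
    (∀ x ∈ Z, x ∈ Set.Icc a b) → (∀ x ∈ Z, 1 ≤ m x) → (∀ x ∈ Z, m x ≤ n+1) →
    (∀ x ∈ Z, ∀ i < m x,
      iteratedDeriv i (fun y => ∑ j ∈ Finset.range (n+1), c j * u j y) x = 0) →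
    (n + 1 ≤ ∑ x ∈ Z, m x) →
    ∀ i ≤ n, c i = 0 := by
  intro n
  induction n with
  | zero =>
    intro U hU a b hsub u hu hW c Z m hZab hm1 hmB hzero hsum i hi
    interval_cases i
    have hZne : Z.Nonempty := by
      rcases Finset.eq_empty_or_nonempty Z with rfl | h
      · simp at hsum
      · exact h
    obtain ⟨x, hx⟩ := hZne
    have hx0 := hzero x hx 0 (hm1 x hx)
    rw [iteratedDeriv_zero] at hx0
    have hx0' : c 0 * u 0 x = 0 := by simpa using hx0
    have hu0 : u 0 x ≠ 0 := by
      have := hW 0 le_rfl x (hZab x hx)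
      erw [Matrix.det_fin_one] at this
      simpa using this
    rcases mul_eq_zero.mp hx0' with h | h
    · exact h
    · exact absurd h hu0
  | succ n ih =>
    intro U hU a b hsub u hu hW c Z m hZab hm1 hmB hzero hsum
    have hu0 : ∀ x ∈ Set.Icc a b, u 0 x ≠ 0 := by
      intro x hx
      have := hW 0 (by omega) x hx
      erw [Matrix.det_fin_one] at this
      simpa using this
    set U' : Set ℝ := U ∩ (u 0) ⁻¹' {(0:ℝ)}ᶜ with hU'def
    have hU' : IsOpen U' :=
      ContinuousOn.isOpen_inter_preimage (hu 0 (by omega)).continuousOn hU isOpen_compl_singleton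
    have hne0 : ∀ x ∈ U', u 0 x ≠ 0 := fun x hx => hx.2
    have hsub' : Set.Icc a b ⊆ U' := fun x hx => ⟨hsub hx, hu0 x hx⟩
    have hUsub : U' ⊆ U := Set.inter_subset_left
    -- the quotient system
    set g : ℕ → ℝ → ℝ := fun j => fun y => u j y / u 0 y with hgdef
    have hg : ∀ j ≤ n+1, ContDiffOn ℝ (n+1) (g j) U' := by
      intro j hj
      exact ((hu j (by omega)).mono hUsub).div ((hu 0 (by omega)).mono hUsub) hne0
    set v : ℕ → ℝ → ℝ := fun j => deriv (g (j+1)) with hvdef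
    have hv : ∀ j ≤ n, ContDiffOn ℝ n (v j) U' := by
      intro j hj
      exact (hg (j+1) (by omega)).deriv_of_isOpen hU' (by exact_mod_cast le_refl (n+1))
    set F : ℝ → ℝ := fun y => ∑ j ∈ Finset.range (n+1+1), c j * u j y with hFdef
    have hFc : ContDiffOn ℝ (n+1) F U' := by
      apply ContDiffOn.sum
      intro j hj
      simp only [Finset.mem_range, Nat.lt_succ_iff] at hj
      exact (contDiffOn_const.mul ((hu j hj).mono hUsub))
    set w : ℝ → ℝ := fun y => (u 0 y)⁻¹ with hwdef
    have hwc : ContDiffOn ℝ (n+1) w U' := ((hu 0 (by omega)).mono hUsub).inv hne0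
    have hdF : ∀ j < n+1, ∀ x ∈ U', DifferentiableAt ℝ (iteratedDeriv j F) x :=
      fun j hj x hx => differentiableAt_iteratedDeriv hU' hFc hj hx
    have hdw : ∀ j < n+1, ∀ x ∈ U', DifferentiableAt ℝ (iteratedDeriv j w) x :=
      fun j hj x hx => differentiableAt_iteratedDeriv hU' hwc hj hx
    set G : ℝ → ℝ := fun y => F y * w y with hGdef
    -- transfer zeros of F to G
    have hGzero : ∀ x ∈ Z, ∀ i < m x, iteratedDeriv i G x = 0 := by
      intro x hx i hi
      have hiN : i ≤ n+1 := by have := hmB x hx; omega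
      rw [iteratedDeriv_mul hU' hdF hdw i hiN x (hsub' (hZab x hx))]
      apply Finset.sum_eq_zero
      intro j hj
      simp only [Finset.mem_range, Nat.lt_succ_iff] at hj
      rw [hzero x hx j (by omega)]
      ring
    have hGc : ContinuousOn G (Set.Icc a b) :=
      ((hFc.mul hwc).continuousOn).mono hsub'
    -- Rolle counting
    obtain ⟨Z', m', hmem', h1', hB', hz', hsum'⟩ :=
      rolle_count (n+1) (by omega) G m Z.card Z rfl a b hGc hZab hm1 hmB hGzero
    have hsum'' : n + 1 ≤ ∑ x ∈ Z', m' x := by omega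
    -- identify deriv G with the new linear combination
    have hGsum : ∀ y, G y = ∑ j ∈ Finset.range (n+1+1), c j * g j y := by
      intro y
      simp only [hGdef, hFdef, hwdef, hgdef]
      rw [Finset.sum_mul]
      apply Finset.sum_congr rfl
      intro j _
      rw [div_eq_mul_inv]
      ring
    set F' : ℝ → ℝ := fun y => ∑ j ∈ Finset.range (n+1), c (j+1) * v j y with hF'def
    have hderivG : ∀ t ∈ U', deriv G t = F' t := by
      intro t ht
      have hgdiff : ∀ j, j ≤ n+1 → DifferentiableAt ℝ (g j) t := by
        intro j hj
        exact ((hg j hj).differentiableOn (by simp)).differentiableAt (hU'.mem_nhds ht)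
      have hterm : ∀ j ∈ Finset.range (n+1+1),
          HasDerivAt (fun y => c j * g j y) (c j * deriv (g j) t) t := by
        intro j hj
        simp only [Finset.mem_range, Nat.lt_succ_iff] at hj
        exact ((hgdiff j hj).hasDerivAt).const_mul (c j)
      have hsd : HasDerivAt (fun y => ∑ j ∈ Finset.range (n+1+1), c j * g j y)
          (∑ j ∈ Finset.range (n+1+1), c j * deriv (g j) t) t := HasDerivAt.fun_sum hterm
      have hGfun : G = fun y => ∑ j ∈ Finset.range (n+1+1), c j * g j y := funext hGsum
      rw [hGfun, hsd.deriv]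
      rw [Finset.sum_range_succ' (fun j => c j * deriv (g j) t) (n+1)]
      have hg0 : deriv (g 0) t = 0 := by
        have h1 : ∀ y ∈ U', g 0 y = (fun _ => (1:ℝ)) y := by
          intro y hy
          exact div_self (hne0 y hy)
        rw [deriv_congr_on hU' h1 ht, deriv_const]
      rw [hg0, mul_zero, add_zero]
    have hF'zero : ∀ x ∈ Z', ∀ i < m' x, iteratedDeriv i F' x = 0 := by
      intro x hx i hi
      have hxU' : x ∈ U' := hsub' (hmem' x hx)
      rw [← iteratedDeriv_congr_on hU' (fun y hy => hderivG y hy) i hxU']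
      exact hz' x hx i hi
    -- Wronskian conditions for the new system
    have hW' : ∀ k ≤ n, ∀ x ∈ Set.Icc a b,
        Matrix.det (fun i j : Fin (k+1) => iteratedDeriv (i : ℕ) (v (j : ℕ)) x) ≠ 0 := by
      intro k hk x hx
      have hxU' : x ∈ U' := hsub' hx
      have hdg : ∀ j, j ≤ n+1 → ∀ l < n+1, ∀ y ∈ U', DifferentiableAt ℝ (iteratedDeriv l (g j)) y :=
        fun j hj l hl y hy => differentiableAt_iteratedDeriv hU' (hg j hj) hl hy
      have hdu0 : ∀ l < n+1, ∀ y ∈ U', DifferentiableAt ℝ (iteratedDeriv l (u 0)) y :=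
        fun l hl y hy => differentiableAt_iteratedDeriv hU' ((hu 0 (by omega)).mono hUsub) hl hy
      have hu_eq : ∀ i ≤ k+1, ∀ j ≤ k+1, iteratedDeriv i (u j) x
          = ∑ l ∈ Finset.range (i+1),
              (i.choose l : ℝ) * iteratedDeriv (i-l) (u 0) x * iteratedDeriv l (g j) x := by
        intro i hik j hjk
        have h1 : ∀ y ∈ U', u j y = g j y * u 0 y := by
          intro y hy
          simp only [hgdef]
          rw [div_mul_cancel₀ _ (hne0 y hy)]
        rw [iteratedDeriv_congr_on hU' h1 i hxU']
        rw [iteratedDeriv_mul hU' (hdg j (by omega)) hdu0 i (by omega) x hxU']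
        apply Finset.sum_congr rfl
        intro l _
        ring
      have hdet1 := det_leibniz (k := k+1) (fun l => iteratedDeriv l (u 0) x)
        (fun l j => iteratedDeriv l (g j) x) (fun i j => iteratedDeriv i (u j) x) hu_eq
      have hWu := hW (k+1) (by omega) x hx
      have hdetg : Matrix.det (fun i j : Fin (k+2) => iteratedDeriv (i : ℕ) (g (j : ℕ)) x) ≠ 0 := by
        intro h0
        apply hWu
        rw [show (fun i j : Fin (k+1+1) => iteratedDeriv (i : ℕ) (u (j : ℕ)) x)
          = (fun i j : Fin (k+1+1) => (fun i j : ℕ => iteratedDeriv i (u j) x) (i : ℕ) (j : ℕ)) from rfl]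
        rw [hdet1]
        rw [show (fun i j : Fin (k+1+1) => (fun l j : ℕ => iteratedDeriv l (g j) x) (i : ℕ) (j : ℕ))
          = (fun i j : Fin (k+2) => iteratedDeriv (i : ℕ) (g (j : ℕ)) x) from rfl, h0, mul_zero]
      have hg0const : ∀ i : ℕ, iteratedDeriv i (g 0) x = if i = 0 then 1 else 0 := by
        intro i
        have h1 : ∀ y ∈ U', g 0 y = (fun _ => (1:ℝ)) y := by
          intro y hy
          exact div_self (hne0 y hy)
        rw [iteratedDeriv_congr_on hU' h1 i hxU', iteratedDeriv_const']
      have hcol := det_expand_first_col (fun i j : Fin (k+2) => iteratedDeriv (i : ℕ) (g (j : ℕ)) x)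
        (by simp [hg0const]) (by intro i; simp [Fin.val_succ, hg0const])
      rw [hcol] at hdetg
      have hsubm : (Matrix.submatrix (fun i j : Fin (k+2) => iteratedDeriv (i : ℕ) (g (j : ℕ)) x)
          Fin.succ Fin.succ) = fun i j : Fin (k+1) => iteratedDeriv (i : ℕ) (v (j : ℕ)) x := by
        funext i j
        show iteratedDeriv ((i.succ : Fin (k+2)) : ℕ) (g ((j.succ : Fin (k+2)) : ℕ)) x = _
        simp only [Fin.val_succ]
        rw [iteratedDeriv_succ']
      rw [hsubm] at hdetg
      exact hdetg
    -- apply the induction hypothesis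
    have hcs : ∀ j ≤ n, c (j+1) = 0 :=
      ih U' hU' a b hsub' v hv hW' (fun j => c (j+1)) Z' m'
        hmem' h1' hB' hF'zero hsum''
    -- finish: also c 0 = 0
    have hc0 : c 0 = 0 := by
      have hZne : Z.Nonempty := by
        rcases Finset.eq_empty_or_nonempty Z with rfl | h
        · simp at hsum
        · exact h
      obtain ⟨x, hx⟩ := hZne
      have hx0 := hzero x hx 0 (hm1 x hx)
      rw [iteratedDeriv_zero] at hx0
      have hsum0 : ∑ j ∈ Finset.range (n+1+1), c j * u j x = c 0 * u 0 x := by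
        apply Finset.sum_eq_single_of_mem 0 (Finset.mem_range.mpr (by omega))
        intro j hjmem hj0
        obtain ⟨j', rfl⟩ := Nat.exists_eq_succ_of_ne_zero hj0
        have hj' : j' ≤ n := by
          simp only [Finset.mem_range] at hjmem
          omega
        rw [hcs j' hj', zero_mul]
      rw [show F x = ∑ j ∈ Finset.range (n+1+1), c j * u j x from rfl, hsum0] at hx0
      rcases mul_eq_zero.mp hx0 with h | h
      · exact h
      · exact absurd h (hu0 x (hZab x hx))
    intro i hi
    cases i with
    | zero => exact hc0
    | succ i => exact hcs i (by omega)

end KS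

/-- Karlin–Studden: if (u₀, …, uₙ) is an ECT system on [a,b] (all Wronskians
W₀,…,Wₙ nonvanishing on [a,b]), then every nonzero linear combination
F = ∑ cᵢ uᵢ has at most n zeros in [a,b], counted with multiplicity (the
multiplicity of a zero x₀ being the least m with F⁽ᵐ⁾(x₀) ≠ 0). -/
theorem stmt_10 (n : ℕ) (u : ℕ → ℝ → ℝ) (a b : ℝ) (hab : a ≤ b)
    (hu : ∀ i ≤ n, ContDiff ℝ n (u i))
    (hW : ∀ k ≤ n, ∀ x ∈ Set.Icc a b,
      Matrix.det (fun i j : Fin (k + 1) =>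
        iteratedDeriv (i : ℕ) (u (j : ℕ)) x) ≠ 0)
    (c : ℕ → ℝ) (hc : ∃ i ≤ n, c i ≠ 0)
    (F : ℝ → ℝ) (hF : F = fun x => ∑ i ∈ Finset.range (n + 1), c i * u i x) :
    ∀ Z : Finset ℝ, (∀ x ∈ Z, x ∈ Set.Icc a b ∧ F x = 0) →
      ∑ x ∈ Z, sInf {m : ℕ | iteratedDeriv m F x ≠ 0} ≤ n := by
  intro Z hZ
  by_contra hlt
  push_neg at hlt
  obtain ⟨i0, hi0, hci0⟩ := hc
  apply hci0
  have huOn : ∀ i ≤ n, ContDiffOn ℝ n (u i) Set.univ := fun i hi => (hu i hi).contDiffOn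
  by_cases hA : ∃ x ∈ Z, ∀ i < n + 1, iteratedDeriv i F x = 0
  · obtain ⟨x, hxZ, hxall⟩ := hA
    refine KS.main_induction n Set.univ isOpen_univ a b (Set.subset_univ _) u huOn hW c
      {x} (fun _ => n + 1) ?_ ?_ ?_ ?_ ?_ i0 hi0
    · intro y hy
      rw [Finset.mem_singleton] at hy
      rw [hy]
      exact (hZ x hxZ).1
    · intro y _
      show 1 ≤ n + 1
      omega
    · intro y _
      show n + 1 ≤ n + 1
      omega
    · intro y hy i hi
      rw [Finset.mem_singleton] at hy
      have hi' : i < n + 1 := hi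
      rw [hy, ← hF]
      exact hxall i hi'
    · show n + 1 ≤ ∑ _y ∈ ({x} : Finset ℝ), (n + 1)
      simp
  · push_neg at hA
    have hSne : ∀ x ∈ Z, {m : ℕ | iteratedDeriv m F x ≠ 0}.Nonempty := by
      intro x hx
      obtain ⟨i, _, hi⟩ := hA x hx
      exact ⟨i, hi⟩
    have hμ1 : ∀ x ∈ Z, 1 ≤ sInf {m : ℕ | iteratedDeriv m F x ≠ 0} := by
      intro x hx
      rcases Nat.eq_zero_or_pos (sInf {m : ℕ | iteratedDeriv m F x ≠ 0}) with h0 | h1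
      · exfalso
        have hmem := Nat.sInf_mem (hSne x hx)
        rw [h0] at hmem
        apply hmem
        rw [iteratedDeriv_zero]
        exact (hZ x hx).2
      · exact h1
    have hμB : ∀ x ∈ Z, sInf {m : ℕ | iteratedDeriv m F x ≠ 0} ≤ n + 1 := by
      intro x hx
      obtain ⟨i, hin, hi⟩ := hA x hx
      exact le_trans (Nat.sInf_le hi) (by omega)
    have hμzero : ∀ x ∈ Z, ∀ i < sInf {m : ℕ | iteratedDeriv m F x ≠ 0},
        iteratedDeriv i F x = 0 := by
      intro x hx i hi
      by_contra h
      exact absurd (Nat.sInf_le (show i ∈ {m : ℕ | iteratedDeriv m F x ≠ 0} from h)) (by omega)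
    refine KS.main_induction n Set.univ isOpen_univ a b (Set.subset_univ _) u huOn hW c
      Z (fun x => sInf {m : ℕ | iteratedDeriv m F x ≠ 0})
      (fun x hx => (hZ x hx).1) hμ1 hμB ?_ ?_ i0 hi0
    · intro x hx i hi
      rw [← hF]
      exact hμzero x hx i hi
    · show n + 1 ≤ ∑ x ∈ Z, sInf {m : ℕ | iteratedDeriv m F x ≠ 0}
      omega
end

section
/- Let λ_0, …, λ_7 be real numbers, not all zero, and let u_0(x) = x^5, u_1(x) = x^4, u_2(x) = x^6, u_3(x) = x^7, u_4(x) = 1, u_5(x) = x^2, u_6(x) = x^3 − x^7, u_7(x) = x + 3x^9. Then the function p(x) = Σ_{k=0}^7 λ_k u_k(x) has at most 7 roots in (0, ∞), counted without multiplicity. -/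
/-- `f` has at least `n` distinct positive zeros. -/
def ZGe (n : ℕ) (f : ℝ → ℝ) : Prop :=
  ∃ l : List ℝ, l.length = n ∧ l.Chain' (· < ·) ∧ ∀ x ∈ l, 0 < x ∧ f x = 0

lemma rolleT (f f' g : ℝ → ℝ) (k : ℝ)
    (hd : ∀ x : ℝ, 0 < x → HasDerivAt f (f' x) x)
    (hg : ∀ x : ℝ, 0 < x → g x = x * f' x - k * f x)
    (a b : ℝ) (ha : 0 < a) (hab : a < b) (hfa : f a = 0) (hfb : f b = 0) :
    ∃ c, a < c ∧ c < b ∧ g c = 0 := by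
  set E : ℝ → ℝ := fun x => Real.exp (-k * Real.log x) with hE
  have hD : ∀ x : ℝ, 0 < x → HasDerivAt (fun y => f y * E y) (E x / x * g x) x := by
    intro x hx0
    have h1 : HasDerivAt E (E x * (-k * x⁻¹)) x :=
      HasDerivAt.exp ((Real.hasDerivAt_log hx0.ne').const_mul (-k))
    have h2 := (hd x hx0).mul h1
    refine h2.congr_deriv ?_
    rw [hg x hx0]
    field_simp
    ring
  have hc : ContinuousOn (fun y => f y * E y) (Set.Icc a b) := fun x hx =>
    ((hD x (lt_of_lt_of_le ha hx.1)).continuousAt).continuousWithinAt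
  have hI : (fun y => f y * E y) a = (fun y => f y * E y) b := by simp [hfa, hfb]
  obtain ⟨c, hc1, hc2⟩ := exists_hasDerivAt_eq_zero hab hc hI
    (fun x hx => hD x (lt_trans ha hx.1))
  have hcpos : 0 < c := lt_trans ha hc1.1
  refine ⟨c, hc1.1, hc1.2, ?_⟩
  have hEc : E c / c ≠ 0 := div_ne_zero (Real.exp_ne_zero _) hcpos.ne'
  exact (mul_eq_zero.mp hc2).resolve_left hEc

lemma zge_aux (f f' g : ℝ → ℝ) (k : ℝ)
    (hd : ∀ x : ℝ, 0 < x → HasDerivAt f (f' x) x)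
    (hg : ∀ x : ℝ, 0 < x → g x = x * f' x - k * f x) :
    ∀ (t : List ℝ) (a : ℝ), 0 < a → f a = 0 → List.Chain (· < ·) a t →
      (∀ x ∈ t, 0 < x ∧ f x = 0) →
      ∃ m : List ℝ, m.length = t.length ∧ m.Chain' (· < ·) ∧ ∀ x ∈ m, a < x ∧ g x = 0 := by
  intro t
  induction t with
  | nil => exact fun a _ _ _ _ => ⟨[], rfl, List.isChain_nil, by simp⟩
  | cons b t ih =>
    intro a ha hfa hch hall
    replace hch := List.isChain_cons_cons.mp hch
    have hb := hall b (by simp)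
    obtain ⟨c, hac, hcb, hgc⟩ := rolleT f f' g k hd hg a b ha hch.1 hfa hb.2
    obtain ⟨m, hm1, hm2, hm3⟩ := ih b hb.1 hb.2 hch.2 (fun x hx => hall x (by simp [hx]))
    refine ⟨c :: m, by simp [hm1], ?_, ?_⟩
    · refine List.isChain_cons.mpr ?_
      exact ⟨fun y hy => lt_trans hcb (hm3 y (List.mem_of_mem_head? hy)).1, hm2⟩
    · intro x hx
      rcases List.mem_cons.mp hx with h | h
      · exact ⟨h ▸ hac, h ▸ hgc⟩
      · exact ⟨lt_trans hch.1 (hm3 x h).1, (hm3 x h).2⟩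

lemma zge_step (n : ℕ) (f f' g : ℝ → ℝ) (k : ℝ)
    (hd : ∀ x : ℝ, 0 < x → HasDerivAt f (f' x) x)
    (hg : ∀ x : ℝ, 0 < x → g x = x * f' x - k * f x)
    (h : ZGe (n + 1) f) : ZGe n g := by
  obtain ⟨l, hl, hch, hall⟩ := h
  match l, hl with
  | a :: t, hl =>
    have ha := hall a (by simp)
    have hcht : List.Chain (· < ·) a t := hch
    obtain ⟨m, hm1, hm2, hm3⟩ := zge_aux f f' g k hd hg t a ha.1 ha.2 hcht
      (fun x hx => hall x (by simp [hx]))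
    refine ⟨m, ?_, hm2, fun x hx => ⟨lt_trans ha.1 (hm3 x hx).1, (hm3 x hx).2⟩⟩
    simp only [List.length_cons] at hl
    rw [hm1]
    omega

lemma hD (c0 c1 c2 c3 c4 c5 c6 c7 c8 c9 x : ℝ) :
    HasDerivAt (fun x : ℝ => c0 + c1 * x + c2 * x ^ 2 + c3 * x ^ 3 + c4 * x ^ 4 + c5 * x ^ 5 +
        c6 * x ^ 6 + c7 * x ^ 7 + c8 * x ^ 8 + c9 * x ^ 9)
      (c1 + 2 * c2 * x + 3 * c3 * x ^ 2 + 4 * c4 * x ^ 3 + 5 * c5 * x ^ 4 + 6 * c6 * x ^ 5 +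
        7 * c7 * x ^ 6 + 8 * c8 * x ^ 7 + 9 * c9 * x ^ 8) x := by
  have h := (((((((((hasDerivAt_const x c0).add ((hasDerivAt_id x).const_mul c1)).add
    ((hasDerivAt_pow 2 x).const_mul c2)).add ((hasDerivAt_pow 3 x).const_mul c3)).add
    ((hasDerivAt_pow 4 x).const_mul c4)).add ((hasDerivAt_pow 5 x).const_mul c5)).add
    ((hasDerivAt_pow 6 x).const_mul c6)).add ((hasDerivAt_pow 7 x).const_mul c7)).add
    ((hasDerivAt_pow 8 x).const_mul c8)).add ((hasDerivAt_pow 9 x).const_mul c9)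
  refine h.congr_deriv ?_
  norm_num
  ring

/-- One reduction step on explicit degree-9 polynomial shapes. -/
lemma stepC (n : ℕ) (k c0 c1 c2 c3 c4 c5 c6 c7 c8 c9 d0 d1 d2 d3 d4 d5 d6 d7 d8 d9 : ℝ)
    (hrel : ∀ x : ℝ, 0 < x →
      d0 + d1 * x + d2 * x ^ 2 + d3 * x ^ 3 + d4 * x ^ 4 + d5 * x ^ 5 + d6 * x ^ 6 +
          d7 * x ^ 7 + d8 * x ^ 8 + d9 * x ^ 9 =
        x * (c1 + 2 * c2 * x + 3 * c3 * x ^ 2 + 4 * c4 * x ^ 3 + 5 * c5 * x ^ 4 +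
            6 * c6 * x ^ 5 + 7 * c7 * x ^ 6 + 8 * c8 * x ^ 7 + 9 * c9 * x ^ 8) -
          k * (c0 + c1 * x + c2 * x ^ 2 + c3 * x ^ 3 + c4 * x ^ 4 + c5 * x ^ 5 + c6 * x ^ 6 +
            c7 * x ^ 7 + c8 * x ^ 8 + c9 * x ^ 9))
    (h : ZGe (n + 1) (fun x : ℝ => c0 + c1 * x + c2 * x ^ 2 + c3 * x ^ 3 + c4 * x ^ 4 +
      c5 * x ^ 5 + c6 * x ^ 6 + c7 * x ^ 7 + c8 * x ^ 8 + c9 * x ^ 9)) :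
    ZGe n (fun x : ℝ => d0 + d1 * x + d2 * x ^ 2 + d3 * x ^ 3 + d4 * x ^ 4 + d5 * x ^ 5 +
      d6 * x ^ 6 + d7 * x ^ 7 + d8 * x ^ 8 + d9 * x ^ 9) :=
  zge_step n _ _ _ k (fun x _ => hD c0 c1 c2 c3 c4 c5 c6 c7 c8 c9 x) hrel h

lemma zge_one (n : ℕ) (f : ℝ → ℝ) (h : ZGe (n + 1) f) : ∃ c : ℝ, 0 < c ∧ f c = 0 := by
  obtain ⟨l, hl, _, hall⟩ := h
  match l, hl with
  | a :: t, _ => exact ⟨a, hall a (by simp)⟩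

lemma coeff_zero (a c : ℝ) (n : ℕ) (hc : 0 < c) (h : a * c ^ n = 0) : a = 0 :=
  (mul_eq_zero.mp h).resolve_right (pow_ne_zero n hc.ne')

lemma zge_of_finset (f : ℝ → ℝ) (t : Finset ℝ) (h : ∀ x ∈ t, 0 < x ∧ f x = 0) :
    ZGe t.card f :=
  ⟨t.sort (· ≤ ·), Finset.length_sort _, (Finset.sortedLT_sort t).isChain,
    fun x hx => h x ((Finset.mem_sort _).mp hx)⟩

/-- A nonzero combination of x⁵, x⁴, x⁶, x⁷, 1, x², x³-x⁷, x+3x⁹ has at most 7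
positive roots (counted without multiplicity). -/
theorem stmt_17 (lam : Fin 8 → ℝ) (hlam : lam ≠ 0) (p : ℝ → ℝ)
    (hp : p = fun x => lam 0 * x ^ 5 + lam 1 * x ^ 4 + lam 2 * x ^ 6 +
      lam 3 * x ^ 7 + lam 4 * 1 + lam 5 * x ^ 2 +
      lam 6 * (x ^ 3 - x ^ 7) + lam 7 * (x + 3 * x ^ 9)) :
    {x : ℝ | 0 < x ∧ p x = 0}.Finite ∧
    {x : ℝ | 0 < x ∧ p x = 0}.ncard ≤ 7 := by
  have key : ¬ ZGe 8 p := by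
    intro h8
    -- rewrite p in the canonical 10-coefficient shape
    have h0 : ZGe 8 (fun x : ℝ => lam 4 + lam 7 * x + lam 5 * x ^ 2 + lam 6 * x ^ 3 +
        lam 1 * x ^ 4 + lam 0 * x ^ 5 + lam 2 * x ^ 6 + (lam 3 - lam 6) * x ^ 7 +
        0 * x ^ 8 + (3 * lam 7) * x ^ 9) := by
      obtain ⟨l, h1, h2, h3⟩ := h8
      refine ⟨l, h1, h2, fun x hx => ⟨(h3 x hx).1, ?_⟩⟩
      have hzero := (h3 x hx).2
      rw [hp] at hzero
      beta_reduce at hzero ⊢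
      linear_combination hzero
    have h1 : ZGe 7 (fun x : ℝ => 0 + lam 7 * x + (2 * lam 5) * x ^ 2 + (3 * lam 6) * x ^ 3 +
        (4 * lam 1) * x ^ 4 + (5 * lam 0) * x ^ 5 + (6 * lam 2) * x ^ 6 +
        (7 * (lam 3 - lam 6)) * x ^ 7 + 0 * x ^ 8 + (27 * lam 7) * x ^ 9) := by
      refine stepC 7 0 _ _ _ _ _ _ _ _ _ _ _ _ _ _ _ _ _ _ _ _ ?_ h0
      intro x hx; ring
    have h2 : ZGe 6 (fun x : ℝ => 0 + (-6 * lam 7) * x + (-10 * lam 5) * x ^ 2 +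
        (-12 * lam 6) * x ^ 3 + (-12 * lam 1) * x ^ 4 + (-10 * lam 0) * x ^ 5 +
        (-6 * lam 2) * x ^ 6 + 0 * x ^ 7 + 0 * x ^ 8 + (54 * lam 7) * x ^ 9) := by
      refine stepC 6 7 _ _ _ _ _ _ _ _ _ _ _ _ _ _ _ _ _ _ _ _ ?_ h1
      intro x hx; ring
    have h3 : ZGe 5 (fun x : ℝ => 0 + (30 * lam 7) * x + (40 * lam 5) * x ^ 2 +
        (36 * lam 6) * x ^ 3 + (24 * lam 1) * x ^ 4 + (10 * lam 0) * x ^ 5 +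
        0 * x ^ 6 + 0 * x ^ 7 + 0 * x ^ 8 + (162 * lam 7) * x ^ 9) := by
      refine stepC 5 6 _ _ _ _ _ _ _ _ _ _ _ _ _ _ _ _ _ _ _ _ ?_ h2
      intro x hx; ring
    have h4 : ZGe 4 (fun x : ℝ => 0 + (-120 * lam 7) * x + (-120 * lam 5) * x ^ 2 +
        (-72 * lam 6) * x ^ 3 + (-24 * lam 1) * x ^ 4 + 0 * x ^ 5 +
        0 * x ^ 6 + 0 * x ^ 7 + 0 * x ^ 8 + (648 * lam 7) * x ^ 9) := by
      refine stepC 4 5 _ _ _ _ _ _ _ _ _ _ _ _ _ _ _ _ _ _ _ _ ?_ h3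
      intro x hx; ring
    have h5 : ZGe 3 (fun x : ℝ => 0 + (360 * lam 7) * x + (240 * lam 5) * x ^ 2 +
        (72 * lam 6) * x ^ 3 + 0 * x ^ 4 + 0 * x ^ 5 +
        0 * x ^ 6 + 0 * x ^ 7 + 0 * x ^ 8 + (3240 * lam 7) * x ^ 9) := by
      refine stepC 3 4 _ _ _ _ _ _ _ _ _ _ _ _ _ _ _ _ _ _ _ _ ?_ h4
      intro x hx; ring
    have h6 : ZGe 2 (fun x : ℝ => 0 + (-720 * lam 7) * x + (-240 * lam 5) * x ^ 2 +
        0 * x ^ 3 + 0 * x ^ 4 + 0 * x ^ 5 +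
        0 * x ^ 6 + 0 * x ^ 7 + 0 * x ^ 8 + (19440 * lam 7) * x ^ 9) := by
      refine stepC 2 3 _ _ _ _ _ _ _ _ _ _ _ _ _ _ _ _ _ _ _ _ ?_ h5
      intro x hx; ring
    have h7 : ZGe 1 (fun x : ℝ => 0 + (720 * lam 7) * x + 0 * x ^ 2 +
        0 * x ^ 3 + 0 * x ^ 4 + 0 * x ^ 5 +
        0 * x ^ 6 + 0 * x ^ 7 + 0 * x ^ 8 + (136080 * lam 7) * x ^ 9) := by
      refine stepC 1 2 _ _ _ _ _ _ _ _ _ _ _ _ _ _ _ _ _ _ _ _ ?_ h6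
      intro x hx; ring
    -- extract the coefficients one by one
    obtain ⟨c, hc, he⟩ := zge_one 0 _ h7
    have hl7 : lam 7 = 0 := by
      have h' : lam 7 * (720 * c + 136080 * c ^ 9) = 0 := by linear_combination he
      have hpos : (0:ℝ) < 720 * c + 136080 * c ^ 9 := by positivity
      exact (mul_eq_zero.mp h').resolve_right hpos.ne'
    obtain ⟨c, hc, he⟩ := zge_one 1 _ h6
    rw [hl7] at he
    have hl5 : lam 5 = 0 := by
      refine coeff_zero _ c 2 hc ?_
      linear_combination (-(1:ℝ)/240) * he
    obtain ⟨c, hc, he⟩ := zge_one 2 _ h5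
    rw [hl7, hl5] at he
    have hl6 : lam 6 = 0 := by
      refine coeff_zero _ c 3 hc ?_
      linear_combination ((1:ℝ)/72) * he
    obtain ⟨c, hc, he⟩ := zge_one 3 _ h4
    rw [hl7, hl5, hl6] at he
    have hl1 : lam 1 = 0 := by
      refine coeff_zero _ c 4 hc ?_
      linear_combination (-(1:ℝ)/24) * he
    obtain ⟨c, hc, he⟩ := zge_one 4 _ h3
    rw [hl7, hl5, hl6, hl1] at he
    have hl0 : lam 0 = 0 := by
      refine coeff_zero _ c 5 hc ?_
      linear_combination ((1:ℝ)/10) * he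
    obtain ⟨c, hc, he⟩ := zge_one 5 _ h2
    rw [hl7, hl5, hl6, hl1, hl0] at he
    have hl2 : lam 2 = 0 := by
      refine coeff_zero _ c 6 hc ?_
      linear_combination (-(1:ℝ)/6) * he
    obtain ⟨c, hc, he⟩ := zge_one 6 _ h1
    rw [hl7, hl5, hl6, hl1, hl0, hl2] at he
    have hl3 : lam 3 = 0 := by
      refine coeff_zero _ c 7 hc ?_
      linear_combination ((1:ℝ)/7) * he
    obtain ⟨c, hc, he⟩ := zge_one 7 _ h0
    rw [hl7, hl5, hl6, hl1, hl0, hl2, hl3] at he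
    have hl4 : lam 4 = 0 := by linear_combination he
    apply hlam
    funext i
    fin_cases i <;> simp only [Pi.zero_apply] <;> assumption
  -- from `key` to the conclusion
  set S := {x : ℝ | 0 < x ∧ p x = 0} with hS
  have main8 : ∀ t : Set ℝ, t ⊆ S → t.Finite → t.ncard = 8 → False := by
    intro t hts htf htc
    apply key
    have hz := zge_of_finset p htf.toFinset (fun x hx => hts (htf.mem_toFinset.mp hx))
    rwa [show htf.toFinset.card = 8 by
      rw [← Set.ncard_eq_toFinset_card t htf, htc]] at hz
  have hfin : S.Finite := by
    by_contra hinf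
    obtain ⟨t, hts, htf, htc⟩ := (show S.Infinite from hinf).exists_subset_ncard_eq 8
    exact main8 t hts htf htc
  refine ⟨hfin, ?_⟩
  by_contra hcard
  push_neg at hcard
  obtain ⟨t, hts, htc⟩ := Set.exists_subset_card_eq (show 8 ≤ S.ncard from hcard)
  exact main8 t hts (hfin.subset hts) htc
end
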